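/- Suppose a system has nonuniform μ-bounded growth with constants K̂ ≥ 1, a ≥ 0 and parameter ε ≥ 0, and admits a nonuniform μ-dichotomy with parameters (P; α, β, θ, ν). If P ≠ 0, then -(a + ε) ≤ α; if P ≠ Id, then β ≤ a + ε. -/

import Mathlib

open Real Set Filter

noncomputable section

/-- A growth rate: strictly increasing, positive, `μ 0 = 1`, `μ → ∞` at `+∞`, `μ → 0` at `-∞`. -/
structure GrowthRate (μ : ℝ → ℝ) : Prop where
  pos : ∀ t, 0 < μ t
  mono : StrictMono μ
  one : μ 0 = 1
  top : Filter.Tendsto μ Filter.atTop Filter.atTop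
  bot : Filter.Tendsto μ Filter.atBot (nhds 0)

/-- Nonuniform μ-dichotomy with projector `P` and parameters `(K, α, β, θ, ν)`. -/
def IsNmuD {M : Type*} [NormedRing M] (μ : ℝ → ℝ) (Φ : ℝ → ℝ → M) (P : ℝ → M)
    (K α β θ ν : ℝ) : Prop :=
  1 ≤ K ∧ α < 0 ∧ 0 < β ∧ 0 ≤ θ ∧ 0 ≤ ν ∧ α + θ < 0 ∧ 0 < β - ν ∧
  (∀ t s : ℝ, s ≤ t →
    ‖Φ t s * P s‖ ≤ K * (μ t / μ s) ^ α * (μ s) ^ (Real.sign s * θ)) ∧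
  (∀ t s : ℝ, t ≤ s →
    ‖Φ t s * (1 - P s)‖ ≤ K * (μ t / μ s) ^ β * (μ s) ^ (Real.sign s * ν))

/-- Nonuniform μ-bounded growth with constants `Khat`, `a` and parameter `ep`. -/
def HasNmuGrowth {M : Type*} [NormedRing M] (μ : ℝ → ℝ) (Φ : ℝ → ℝ → M)
    (Khat a ep : ℝ) : Prop :=
  1 ≤ Khat ∧ 0 ≤ a ∧ ∀ t s : ℝ,
    ‖Φ t s‖ ≤ Khat * (μ t / μ s) ^ (Real.sign (t - s) * a) * μ s ^ (Real.sign s * ep)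

/-- growth constants bound the dichotomy exponents. -/
theorem stmt2 {M : Type*} [NormedRing M] [NormOneClass M] (μ : ℝ → ℝ)
    (hμ : GrowthRate μ) (Ψ : ℝ → ℝ → M) (P : ℝ → M)
    (hinv : ∀ t s : ℝ, Ψ s t * Ψ t s = 1)
    (Khat a ep : ℝ) (hep : 0 ≤ ep)
    (hg : HasNmuGrowth μ Ψ Khat a ep)
    (K α β θ ν : ℝ) (h : IsNmuD μ Ψ P K α β θ ν) :
    ((∃ s : ℝ, P s ≠ 0) → -(a + ep) ≤ α) ∧
    ((∃ s : ℝ, P s ≠ 1) → β ≤ a + ep) := by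
  obtain ⟨hK1, hα, hβ, hθ, hν, hαθ, hβν, hPle, hQle⟩ := h
  obtain ⟨hKhat, ha, hgr⟩ := hg
  constructor
  · rintro ⟨s, hPs⟩
    by_contra hcon
    push_neg at hcon
    apply hPs
    have hμs : 0 < μ s := hμ.pos s
    have hc : a + α + ep < 0 := by linarith
    set C : ℝ := Khat * K * (μ s ^ (Real.sign s * θ) / μ s ^ (a + α)) with hC
    have key : ∀ t : ℝ, max (s + 1) 1 ≤ t → ‖P s‖ ≤ C * μ t ^ (a + α + ep) := by
      intro t ht
      have hs1 : s + 1 ≤ t := le_trans (le_max_left _ _) ht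
      have h1t : (1 : ℝ) ≤ t := le_trans (le_max_right _ _) ht
      have hst : s < t := by linarith
      have ht0 : 0 < t := by linarith
      have hμt : 0 < μ t := hμ.pos t
      have hsgn1 : Real.sign (s - t) = -1 := Real.sign_of_neg (by linarith)
      have hsgnt : Real.sign t = 1 := Real.sign_of_pos ht0
      have h1 : ‖Ψ s t‖ ≤ Khat * (μ t / μ s) ^ a * μ t ^ ep := by
        have hb := hgr s t
        rw [hsgn1, hsgnt, neg_one_mul, one_mul,
          Real.rpow_neg (by positivity), ← Real.inv_rpow (by positivity), inv_div] at hb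
        exact hb
      have h2 : ‖Ψ t s * P s‖ ≤ K * (μ t / μ s) ^ α * μ s ^ (Real.sign s * θ) :=
        hPle t s hst.le
      have h3 : ‖P s‖ ≤ ‖Ψ s t‖ * ‖Ψ t s * P s‖ := by
        calc ‖P s‖ = ‖Ψ s t * (Ψ t s * P s)‖ := by rw [← mul_assoc, hinv t s, one_mul]
        _ ≤ _ := norm_mul_le _ _
      have h4 : ‖P s‖ ≤ (Khat * (μ t / μ s) ^ a * μ t ^ ep) *
          (K * (μ t / μ s) ^ α * μ s ^ (Real.sign s * θ)) :=
        h3.trans (mul_le_mul h1 h2 (norm_nonneg _) (by positivity))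
      refine h4.trans (le_of_eq ?_)
      rw [hC, Real.div_rpow hμt.le hμs.le, Real.div_rpow hμt.le hμs.le,
        Real.rpow_add hμt, Real.rpow_add hμt, Real.rpow_add hμs]
      have e1 : (0:ℝ) < μ s ^ a := Real.rpow_pos_of_pos hμs a
      have e2 : (0:ℝ) < μ s ^ α := Real.rpow_pos_of_pos hμs α
      field_simp
    have hten : Tendsto (fun t => C * μ t ^ (a + α + ep)) atTop (nhds 0) := by
      have h0 : Tendsto (fun x : ℝ => x ^ (a + α + ep)) atTop (nhds 0) := by
        have := tendsto_rpow_neg_atTop (y := -(a + α + ep)) (by linarith)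
        simpa using this
      have := (h0.comp hμ.top).const_mul C
      simpa using this
    have hle : ‖P s‖ ≤ 0 :=
      ge_of_tendsto hten (eventually_atTop.mpr ⟨max (s + 1) 1, key⟩)
    exact norm_le_zero_iff.mp hle
  · rintro ⟨s, hPs⟩
    by_contra hcon
    push_neg at hcon
    apply hPs
    have hμs : 0 < μ s := hμ.pos s
    have hc : 0 < β - a - ep := by linarith
    set C : ℝ := Khat * K * (μ s ^ (Real.sign s * ν) * μ s ^ a / μ s ^ β) with hC
    have key : ∀ t : ℝ, t ≤ min (s - 1) (-1) → ‖1 - P s‖ ≤ C * μ t ^ (β - a - ep) := by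
      intro t ht
      have hs1 : t ≤ s - 1 := le_trans ht (min_le_left _ _)
      have h1t : t ≤ (-1 : ℝ) := le_trans ht (min_le_right _ _)
      have hst : t < s := by linarith
      have ht0 : t < 0 := by linarith
      have hμt : 0 < μ t := hμ.pos t
      have hsgn1 : Real.sign (s - t) = 1 := Real.sign_of_pos (by linarith)
      have hsgnt : Real.sign t = -1 := Real.sign_of_neg ht0
      have h1 : ‖Ψ s t‖ ≤ Khat * (μ s / μ t) ^ a * (μ t ^ ep)⁻¹ := by
        have hb := hgr s t
        rw [hsgn1, hsgnt, one_mul, neg_one_mul, Real.rpow_neg hμt.le] at hb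
        exact hb
      have h2 : ‖Ψ t s * (1 - P s)‖ ≤ K * (μ t / μ s) ^ β * μ s ^ (Real.sign s * ν) :=
        hQle t s hst.le
      have h3 : ‖1 - P s‖ ≤ ‖Ψ s t‖ * ‖Ψ t s * (1 - P s)‖ := by
        calc ‖1 - P s‖ = ‖Ψ s t * (Ψ t s * (1 - P s))‖ := by
              rw [← mul_assoc, hinv t s, one_mul]
        _ ≤ _ := norm_mul_le _ _
      have h4 : ‖1 - P s‖ ≤ (Khat * (μ s / μ t) ^ a * (μ t ^ ep)⁻¹) *
          (K * (μ t / μ s) ^ β * μ s ^ (Real.sign s * ν)) :=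
        h3.trans (mul_le_mul h1 h2 (norm_nonneg _) (by positivity))
      refine h4.trans (le_of_eq ?_)
      rw [hC, Real.div_rpow hμs.le hμt.le, Real.div_rpow hμt.le hμs.le]
      have hsub : (β - a - ep : ℝ) = β + (-a) + (-ep) := by ring
      rw [hsub, Real.rpow_add hμt, Real.rpow_add hμt,
        Real.rpow_neg hμt.le a, Real.rpow_neg hμt.le ep]
      have e1 : (0:ℝ) < μ s ^ β := Real.rpow_pos_of_pos hμs β
      have e2 : (0:ℝ) < μ t ^ a := Real.rpow_pos_of_pos hμt a
      have e3 : (0:ℝ) < μ t ^ ep := Real.rpow_pos_of_pos hμt ep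
      field_simp
    have hten : Tendsto (fun t => C * μ t ^ (β - a - ep)) atBot (nhds 0) := by
      have h0 : Tendsto (fun x : ℝ => x ^ (β - a - ep)) (nhds 0) (nhds 0) := by
        have := (Real.continuousAt_rpow_const 0 (β - a - ep) (Or.inr hc.le)).tendsto
        rwa [Real.zero_rpow hc.ne'] at this
      have := (h0.comp hμ.bot).const_mul C
      simpa using this
    have hle : ‖1 - P s‖ ≤ 0 :=
      ge_of_tendsto hten (eventually_atBot.mpr ⟨min (s - 1) (-1), key⟩)
    have h0 : (1 : M) - P s = 0 := norm_le_zero_iff.mp hle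
    rw [sub_eq_zero] at h0
    exact h0.symm
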